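/- In any symmetric endoadjunction, defining φ'_A = φ_A ∘ χ^{GF}_A and γ'_A = χ^{GF}_A ∘ γ_A, the sextuple ⟨A, A, G, F, φ', γ'⟩ is an adjunction with G left adjoint to F; i.e., the triangular equations φ'_{GA} ∘ G γ'_A = 1_{GA} and F φ'_A ∘ γ'_{FA} = 1_{FA} hold. -/
import Mathlib


open CategoryTheory

section

variable {A : Type*} [Category A] (F G : A ⥤ A)
  (φ : ∀ X : A, F.obj (G.obj X) ⟶ X) (γ : ∀ X : A, X ⟶ G.obj (F.obj X))
  (χGF : ∀ X : A, G.obj (F.obj X) ⟶ F.obj (G.obj X))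

theorem aux (F G : A ⥤ A)
    (φ : ∀ X : A, F.obj (G.obj X) ⟶ X) (γ : ∀ X : A, X ⟶ G.obj (F.obj X))
    (k : ∀ X : A, G.obj (F.obj X) ⟶ F.obj (G.obj X))
    (χ : ∀ X : A, F.obj (F.obj X) ⟶ F.obj (F.obj X))
    (kp : ∀ X : A, F.obj (G.obj X) ⟶ G.obj (F.obj X))
    (hφ : ∀ {X Y : A} (f : X ⟶ Y), F.map (G.map f) ≫ φ Y = φ X ≫ f)
    (hγ : ∀ {X Y : A} (f : X ⟶ Y), γ X ≫ G.map (F.map f) = f ≫ γ Y)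
    (htr₁ : ∀ X : A, F.map (γ X) ≫ φ (F.obj X) = 𝟙 (F.obj X))
    (htr₂ : ∀ X : A, γ (G.obj X) ≫ G.map (φ X) = 𝟙 (G.obj X))
    (hχdef : ∀ X : A, χ X = γ (F.obj (F.obj X)) ≫ k (F.obj (F.obj X)) ≫
      F.map (k (F.obj X)) ≫ F.map (F.map (k X ≫ φ X)))
    (hkpdef : ∀ X : A, kp X = γ (F.obj (G.obj X)) ≫ G.map (χ (G.obj X)) ≫ G.map (F.map (φ X)))
    (hχnat : ∀ {X Y : A} (f : X ⟶ Y), F.map (F.map f) ≫ χ Y = χ X ≫ F.map (F.map f))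
    (hχχ : ∀ X : A, χ X ≫ χ X = 𝟙 (F.obj (F.obj X)))
    (hχχχ : ∀ X : A, χ (F.obj X) ≫ F.map (χ X) ≫ χ (F.obj X) =
      F.map (χ X) ≫ χ (F.obj X) ≫ F.map (χ X))
    (hinv₁ : ∀ X : A, k X ≫ kp X = 𝟙 (G.obj (F.obj X)))
    (hinv₂ : ∀ X : A, kp X ≫ k X = 𝟙 (F.obj (G.obj X))) (X : A) :
    G.map (γ X ≫ k X) ≫ (k (G.obj X) ≫ φ (G.obj X)) = 𝟙 (G.obj X) ∧
      (γ (F.obj X) ≫ k (F.obj X)) ≫ F.map (k X ≫ φ X) = 𝟙 (F.obj X) := by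
  -- injectivity of transposition
  have inj : ∀ {B C : A} (q₁ q₂ : B ⟶ G.obj C),
      F.map q₁ ≫ φ C = F.map q₂ ≫ φ C → q₁ = q₂ := by
    intro B C q₁ q₂ h
    have e : ∀ q : B ⟶ G.obj C, γ B ≫ G.map (F.map q ≫ φ C) = q := by
      intro q
      rw [G.map_comp, ← Category.assoc, hγ q, Category.assoc, htr₂, Category.comp_id]
    rw [← e q₁, ← e q₂, h]
  -- K' : F kp ≫ φ_F = χ_G ≫ F φ
  have K' : ∀ B : A, F.map (kp B) ≫ φ (F.obj B) = χ (G.obj B) ≫ F.map (φ B) := by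
    intro B
    rw [hkpdef B]
    simp only [Functor.map_comp, Category.assoc]
    slice_lhs 3 4 => rw [hφ (F.map (φ B))]
    slice_lhs 2 3 => rw [hφ (χ (G.obj B))]
    slice_lhs 1 2 => rw [htr₁ (F.obj (G.obj B))]
    simp
  have kpnat : ∀ {B C : A} (f : B ⟶ C),
      F.map (G.map f) ≫ kp C = kp B ≫ G.map (F.map f) := by
    intro B C f
    rw [hkpdef C, hkpdef B]
    slice_lhs 1 2 => rw [← hγ (F.map (G.map f))]
    slice_lhs 2 3 => rw [← G.map_comp, hχnat (G.map f), G.map_comp]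
    slice_lhs 3 4 => rw [← G.map_comp, ← F.map_comp, hφ f, F.map_comp, G.map_comp]
    simp
  have knat : ∀ {B C : A} (f : B ⟶ C),
      G.map (F.map f) ≫ k C = k B ≫ F.map (G.map f) := by
    intro B C f
    rw [show G.map (F.map f) ≫ k C = (k B ≫ kp B) ≫ G.map (F.map f) ≫ k C from by
      rw [hinv₁ B, Category.id_comp]]
    slice_lhs 2 3 => rw [← kpnat f]
    slice_lhs 3 4 => rw [hinv₂ C]
    simp
  have K : ∀ B : A, F.map (k B) ≫ χ (G.obj B) ≫ F.map (φ B) = φ (F.obj B) := by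
    intro B
    have h1 : γ (G.obj (F.obj B)) ≫ G.map (F.map (k B) ≫ χ (G.obj B) ≫ F.map (φ B))
        = 𝟙 (G.obj (F.obj B)) := by
      have h0 := hinv₁ B
      rw [hkpdef B] at h0
      simp only [Functor.map_comp]
      slice_lhs 1 2 => rw [hγ (k B)]
      simp only [Category.assoc]
      exact h0
    calc F.map (k B) ≫ χ (G.obj B) ≫ F.map (φ B)
        = (F.map (γ (G.obj (F.obj B))) ≫ φ (F.obj (G.obj (F.obj B)))) ≫
            (F.map (k B) ≫ χ (G.obj B) ≫ F.map (φ B)) := by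
          rw [htr₁, Category.id_comp]
      _ = F.map (γ (G.obj (F.obj B))) ≫
            F.map (G.map (F.map (k B) ≫ χ (G.obj B) ≫ F.map (φ B))) ≫ φ (F.obj B) := by
          rw [Category.assoc, ← hφ (F.map (k B) ≫ χ (G.obj B) ≫ F.map (φ B))]
      _ = F.map (γ (G.obj (F.obj B)) ≫
            G.map (F.map (k B) ≫ χ (G.obj B) ≫ F.map (φ B))) ≫ φ (F.obj B) := by
          rw [F.map_comp, Category.assoc]
      _ = φ (F.obj B) := by rw [h1]; simp
  have W : ∀ B : A, F.map (k (F.obj B)) ≫ χ (G.obj (F.obj B)) ≫ F.map (F.map (k B)) ≫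
      F.map (χ (G.obj B)) ≫ F.map (F.map (φ B)) = φ (F.obj (F.obj B)) := by
    intro B
    slice_lhs 4 5 => rw [← F.map_comp, ← K' B, F.map_comp]
    slice_lhs 3 4 => rw [← F.map_comp, ← F.map_comp, hinv₁ B, F.map_id, F.map_id]
    simp only [Category.id_comp, Category.comp_id, Category.assoc]
    exact K (F.obj B)
  have P : ∀ B : A, k (F.obj B) ≫ F.map (k B) ≫ χ (G.obj B) ≫ F.map (kp B) ≫ kp (F.obj B)
      = G.map (χ B) := by
    intro B
    apply inj
    simp only [Functor.map_comp, Category.assoc]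
    slice_lhs 5 6 => rw [K' (F.obj B)]
    slice_lhs 4 5 => rw [hχnat (kp B)]
    slice_lhs 5 6 => rw [← F.map_comp, K' B, F.map_comp]
    slice_lhs 3 5 => rw [← hχχχ (G.obj B)]
    slice_lhs 2 3 => rw [hχnat (k B)]
    slice_lhs 5 6 => rw [← hχnat (φ B)]
    slice_lhs 1 5 => rw [W B]
    rw [hφ (χ B)]
  have YBa : ∀ B : A, G.map (χ B) ≫ k (F.obj B) ≫ F.map (k B)
      = k (F.obj B) ≫ F.map (k B) ≫ χ (G.obj B) := by
    intro B
    rw [← P B]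
    simp only [Category.assoc]
    slice_lhs 5 6 => rw [hinv₂ (F.obj B)]
    simp only [Category.id_comp, Category.comp_id, Category.assoc]
    slice_lhs 4 5 => rw [← F.map_comp, hinv₂ B, F.map_id]
    simp
  have YBb : ∀ B : A, F.map (k (G.obj B)) ≫ χ (G.obj (G.obj B)) ≫ F.map (kp (G.obj B))
      = kp (F.obj (G.obj B)) ≫ G.map (χ (G.obj B)) ≫ k (F.obj (G.obj B)) := by
    intro B
    rw [show F.map (k (G.obj B)) ≫ χ (G.obj (G.obj B)) ≫ F.map (kp (G.obj B))
        = (kp (F.obj (G.obj B)) ≫ k (F.obj (G.obj B))) ≫ F.map (k (G.obj B)) ≫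
            χ (G.obj (G.obj B)) ≫ F.map (kp (G.obj B)) from by
      rw [hinv₂ (F.obj (G.obj B)), Category.id_comp]]
    slice_lhs 2 4 => rw [← YBa (G.obj B)]
    simp only [Category.id_comp, Category.comp_id, Category.assoc]
    slice_lhs 4 5 => rw [← F.map_comp, hinv₁ (G.obj B), F.map_id]
    simp
  have etaNat : ∀ {B C : A} (f : B ⟶ C),
      f ≫ (γ C ≫ k C) = (γ B ≫ k B) ≫ F.map (G.map f) := by
    intro B C f
    rw [← Category.assoc, ← hγ f, Category.assoc, knat f, Category.assoc]
  have epsNat : ∀ {B C : A} (f : B ⟶ C),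
      G.map (F.map f) ≫ (k C ≫ φ C) = (k B ≫ φ B) ≫ f := by
    intro B C f
    rw [← Category.assoc, knat f, Category.assoc, hφ f, Category.assoc]
  have tF : ∀ B : A, (γ (F.obj (F.obj B)) ≫ k (F.obj (F.obj B))) ≫
      F.map (k (F.obj B) ≫ φ (F.obj B)) = 𝟙 (F.obj (F.obj B)) := by
    intro B
    have hS : χ B = γ (F.obj (F.obj B)) ≫ k (F.obj (F.obj B)) ≫ F.map (k (F.obj B)) ≫
        F.map (F.map (k B)) ≫ F.map (F.map (φ B)) := by
      rw [hχdef B]; simp only [Functor.map_comp, Category.assoc]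
    simp only [Functor.map_comp, Category.assoc]
    conv_lhs => rw [← K B]
    simp only [Functor.map_comp, Category.assoc]
    slice_lhs 3 5 => rw [← F.map_comp, ← F.map_comp, ← YBa B, F.map_comp, F.map_comp]
    slice_lhs 2 3 => rw [← knat (χ B)]
    slice_lhs 1 2 => rw [hγ (χ B)]
    slice_lhs 2 6 => rw [← hS]
    rw [hχχ B]
  have t1 : ∀ B : A, (γ (F.obj B) ≫ k (F.obj B)) ≫ F.map (k B ≫ φ B) = 𝟙 (F.obj B) := by
    intro B
    have hr : F.map (γ B ≫ k B) ≫ F.map (kp B) ≫ φ (F.obj B) = 𝟙 (F.obj B) := by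
      have h2 : F.map (γ B ≫ k B) ≫ F.map (kp B) = F.map (γ B) := by
        rw [← F.map_comp, Category.assoc, hinv₁ B, Category.comp_id]
      rw [← Category.assoc, h2, htr₁ B]
    have hnat : F.map (γ B ≫ k B) ≫
        ((γ (F.obj (F.obj (G.obj B))) ≫ k (F.obj (F.obj (G.obj B)))) ≫
          F.map (k (F.obj (G.obj B)) ≫ φ (F.obj (G.obj B))))
        = ((γ (F.obj B) ≫ k (F.obj B)) ≫ F.map (k B ≫ φ B)) ≫ F.map (γ B ≫ k B) := by
      rw [← Category.assoc, etaNat (F.map (γ B ≫ k B)), Category.assoc, ← F.map_comp,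
        epsNat (γ B ≫ k B), F.map_comp]
      simp only [Category.assoc]
    rw [tF (G.obj B), Category.comp_id] at hnat
    calc (γ (F.obj B) ≫ k (F.obj B)) ≫ F.map (k B ≫ φ B)
        = ((γ (F.obj B) ≫ k (F.obj B)) ≫ F.map (k B ≫ φ B)) ≫
            F.map (γ B ≫ k B) ≫ F.map (kp B) ≫ φ (F.obj B) := by rw [hr, Category.comp_id]
      _ = (((γ (F.obj B) ≫ k (F.obj B)) ≫ F.map (k B ≫ φ B)) ≫ F.map (γ B ≫ k B)) ≫
            F.map (kp B) ≫ φ (F.obj B) := by simp only [Category.assoc]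
      _ = F.map (γ B ≫ k B) ≫ F.map (kp B) ≫ φ (F.obj B) := by rw [← hnat]
      _ = 𝟙 (F.obj B) := hr
  have Tlem : ∀ B : A, F.map (k (G.obj B) ≫ φ (G.obj B)) ≫ φ B =
      F.map (G.map (kp B)) ≫ kp (G.obj (F.obj B)) ≫ G.map (φ (F.obj B)) ≫ k B ≫ φ B := by
    intro B
    calc F.map (k (G.obj B) ≫ φ (G.obj B)) ≫ φ B
        = F.map (k (G.obj B)) ≫ (χ (G.obj (G.obj B)) ≫ χ (G.obj (G.obj B))) ≫
            F.map (φ (G.obj B)) ≫ φ B := by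
          rw [hχχ (G.obj (G.obj B)), Category.id_comp, F.map_comp, Category.assoc]
      _ = F.map (k (G.obj B)) ≫ χ (G.obj (G.obj B)) ≫ F.map (kp (G.obj B)) ≫
            φ (F.obj (G.obj B)) ≫ φ B := by
          simp only [Category.assoc]
          slice_lhs 3 4 => rw [← K' (G.obj B)]
          simp only [Category.assoc]
      _ = kp (F.obj (G.obj B)) ≫ G.map (χ (G.obj B)) ≫ k (F.obj (G.obj B)) ≫
            φ (F.obj (G.obj B)) ≫ φ B := by
          slice_lhs 1 3 => rw [YBb B]
          simp only [Category.assoc]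
      _ = kp (F.obj (G.obj B)) ≫ G.map (χ (G.obj B)) ≫ k (F.obj (G.obj B)) ≫
            F.map (G.map (φ B)) ≫ φ B := by
          slice_lhs 4 5 => rw [← hφ (φ B)]
      _ = kp (F.obj (G.obj B)) ≫ G.map (χ (G.obj B)) ≫ G.map (F.map (φ B)) ≫ k B ≫ φ B := by
          slice_lhs 3 4 => rw [← knat (φ B)]
          simp only [Category.assoc]
      _ = kp (F.obj (G.obj B)) ≫ G.map (F.map (kp B)) ≫ G.map (φ (F.obj B)) ≫ k B ≫ φ B := by
          slice_lhs 2 3 => rw [← G.map_comp, ← K' B, G.map_comp]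
          simp only [Category.assoc]
      _ = F.map (G.map (kp B)) ≫ kp (G.obj (F.obj B)) ≫ G.map (φ (F.obj B)) ≫ k B ≫ φ B := by
          slice_lhs 1 2 => rw [← kpnat (kp B)]
          simp only [Category.assoc]
  have sG : ∀ B : A, G.map (γ (G.obj B) ≫ k (G.obj B)) ≫
      (k (G.obj (G.obj B)) ≫ φ (G.obj (G.obj B))) = 𝟙 (G.obj (G.obj B)) := by
    intro B
    apply inj _ (𝟙 _)
    rw [F.map_id, Category.id_comp]
    calc F.map (G.map (γ (G.obj B) ≫ k (G.obj B)) ≫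
            (k (G.obj (G.obj B)) ≫ φ (G.obj (G.obj B)))) ≫ φ (G.obj B)
        = F.map (G.map (γ (G.obj B) ≫ k (G.obj B))) ≫
            F.map (k (G.obj (G.obj B)) ≫ φ (G.obj (G.obj B))) ≫ φ (G.obj B) := by
          rw [F.map_comp, Category.assoc]
      _ = F.map (G.map (γ (G.obj B) ≫ k (G.obj B))) ≫ F.map (G.map (kp (G.obj B))) ≫
            kp (G.obj (F.obj (G.obj B))) ≫ G.map (φ (F.obj (G.obj B))) ≫
            k (G.obj B) ≫ φ (G.obj B) := by
          rw [Tlem (G.obj B)]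
      _ = F.map (G.map (γ (G.obj B))) ≫ kp (G.obj (F.obj (G.obj B))) ≫
            G.map (φ (F.obj (G.obj B))) ≫ k (G.obj B) ≫ φ (G.obj B) := by
          rw [← Category.assoc, ← F.map_comp, ← G.map_comp, Category.assoc,
            hinv₁ (G.obj B), Category.comp_id]
      _ = kp (G.obj B) ≫ G.map (F.map (γ (G.obj B))) ≫
            G.map (φ (F.obj (G.obj B))) ≫ k (G.obj B) ≫ φ (G.obj B) := by
          slice_lhs 1 2 => rw [kpnat (γ (G.obj B))]
          simp only [Category.assoc]
      _ = kp (G.obj B) ≫ k (G.obj B) ≫ φ (G.obj B) := by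
          slice_lhs 2 3 => rw [← G.map_comp, htr₁ (G.obj B), G.map_id]
          simp only [Category.id_comp, Category.comp_id, Category.assoc]
      _ = φ (G.obj B) := by rw [← Category.assoc, hinv₂ (G.obj B), Category.id_comp]
  have snat : ∀ {B C : A} (f : B ⟶ C),
      G.map f ≫ (G.map (γ C ≫ k C) ≫ (k (G.obj C) ≫ φ (G.obj C)))
      = (G.map (γ B ≫ k B) ≫ (k (G.obj B) ≫ φ (G.obj B))) ≫ G.map f := by
    intro B C f
    rw [← Category.assoc, ← G.map_comp, etaNat f, G.map_comp, Category.assoc,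
      epsNat (G.map f)]
    simp only [Category.assoc]
  constructor
  · have w : (γ (G.obj X) ≫ G.map (kp X)) ≫ G.map (k X ≫ φ X) = 𝟙 (G.obj X) := by
      rw [Category.assoc, ← G.map_comp, ← Category.assoc, hinv₂ X, Category.id_comp, htr₂ X]
    rw [show G.map (γ X ≫ k X) ≫ (k (G.obj X) ≫ φ (G.obj X))
        = ((γ (G.obj X) ≫ G.map (kp X)) ≫ G.map (k X ≫ φ X)) ≫
          (G.map (γ X ≫ k X) ≫ (k (G.obj X) ≫ φ (G.obj X))) from by
      rw [w, Category.id_comp]]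
    slice_lhs 3 6 => rw [snat (k X ≫ φ X)]
    simp only [Category.assoc]
    slice_lhs 3 5 => rw [sG (F.obj X)]
    simp only [Category.id_comp, Category.comp_id, Category.assoc]
    simp only [Category.assoc] at w
    exact w
  · exact t1 X


/-- The natural transformation `χ : FF ⟹ FF` of a symmetric endoadjunction, defined by
`χ_A = FF(φ_A ∘ χ^{GF}_A) ∘ F χ^{GF}_{FA} ∘ χ^{GF}_{FFA} ∘ γ_{FFA}`. -/
def chiOf (X : A) : F.obj (F.obj X) ⟶ F.obj (F.obj X) :=
  γ (F.obj (F.obj X)) ≫ χGF (F.obj (F.obj X)) ≫ F.map (χGF (F.obj X)) ≫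
    F.map (F.map (χGF X ≫ φ X))

/-- The arrow `χ^{FG}_A = GFφ_A ∘ Gχ_{GA} ∘ γ_{FGA} : FGA → GFA`. -/
def chiFGOf (X : A) : F.obj (G.obj X) ⟶ G.obj (F.obj X) :=
  γ (F.obj (G.obj X)) ≫ G.map (chiOf F G φ γ χGF (G.obj X)) ≫ G.map (F.map (φ X))

/-- In any symmetric endoadjunction `⟨A, F, G, φ, γ, χ^{GF}⟩`, defining
`φ'_A = φ_A ∘ χ^{GF}_A` and `γ'_A = χ^{GF}_A ∘ γ_A`, the data `⟨A, A, G, F, φ', γ'⟩` form an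
adjunction with `G` left adjoint to `F`: the triangular equations
`φ'_{GA} ∘ G γ'_A = 1_{GA}` and `F φ'_A ∘ γ'_{FA} = 1_{FA}` hold. -/
theorem symmetricEndoadjunction_bijunction
    (hφ : ∀ {X Y : A} (f : X ⟶ Y), F.map (G.map f) ≫ φ Y = φ X ≫ f)
    (hγ : ∀ {X Y : A} (f : X ⟶ Y), γ X ≫ G.map (F.map f) = f ≫ γ Y)
    (htr₁ : ∀ X : A, F.map (γ X) ≫ φ (F.obj X) = 𝟙 (F.obj X))
    (htr₂ : ∀ X : A, γ (G.obj X) ≫ G.map (φ X) = 𝟙 (G.obj X))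
    (hχnat : ∀ {X Y : A} (f : X ⟶ Y),
      F.map (F.map f) ≫ chiOf F G φ γ χGF Y = chiOf F G φ γ χGF X ≫ F.map (F.map f))
    (hχχ : ∀ X : A, chiOf F G φ γ χGF X ≫ chiOf F G φ γ χGF X = 𝟙 (F.obj (F.obj X)))
    (hχχχ : ∀ X : A,
      chiOf F G φ γ χGF (F.obj X) ≫ F.map (chiOf F G φ γ χGF X) ≫
          chiOf F G φ γ χGF (F.obj X) =
        F.map (chiOf F G φ γ χGF X) ≫ chiOf F G φ γ χGF (F.obj X) ≫
          F.map (chiOf F G φ γ χGF X))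
    (hinv₁ : ∀ X : A, χGF X ≫ chiFGOf F G φ γ χGF X = 𝟙 (G.obj (F.obj X)))
    (hinv₂ : ∀ X : A, chiFGOf F G φ γ χGF X ≫ χGF X = 𝟙 (F.obj (G.obj X)))
    (X : A) :
    G.map (γ X ≫ χGF X) ≫ (χGF (G.obj X) ≫ φ (G.obj X)) = 𝟙 (G.obj X) ∧
      (γ (F.obj X) ≫ χGF (F.obj X)) ≫ F.map (χGF X ≫ φ X) = 𝟙 (F.obj X) :=
  aux F G φ γ χGF (chiOf F G φ γ χGF) (chiFGOf F G φ γ χGF) hφ hγ htr₁ htr₂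
    (fun _ => rfl) (fun _ => rfl) hχnat hχχ hχχχ hinv₁ hinv₂ X
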